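/- Let P, Q be probability measures on ℝ with quantile functions F_P^←, F_Q^←. Then inf over all couplings π of P and Q of ∫ |u−v| dπ(u,v) equals ∫₀¹ |F_P^←(x) − F_Q^←(x)| dx. -/

import Mathlib

open MeasureTheory Set ENNReal

/-- Cumulative distribution function of a measure on `ℝ`. -/
noncomputable def cdf (P : Measure ℝ) (z : ℝ) : ℝ := (P (Iic z)).toReal

/-- Quantile function (generalized inverse of the cdf). -/
noncomputable def quantile (P : Measure ℝ) (x : ℝ) : ℝ := sInf {z : ℝ | x ≤ cdf P z}

open Filter Topology

section aux
variable (P : Measure ℝ) [IsProbabilityMeasure P]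

lemma cdf_eq (z : ℝ) : cdf P z = ProbabilityTheory.cdf P z :=
  (ProbabilityTheory.cdf_eq_real P z).symm

lemma cdf_mono : Monotone (cdf P) := by
  intro a b hab; rw [cdf_eq, cdf_eq]; exact ProbabilityTheory.monotone_cdf P hab

lemma cdf_nonneg' (z : ℝ) : 0 ≤ cdf P z := by
  rw [cdf_eq]; exact ProbabilityTheory.cdf_nonneg P z

lemma cdf_le_one' (z : ℝ) : cdf P z ≤ 1 := by
  rw [cdf_eq]; exact ProbabilityTheory.cdf_le_one P z

lemma gal {x : ℝ} (hx : x ∈ Ioo (0:ℝ) 1) (z : ℝ) :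
    quantile P x ≤ z ↔ x ≤ cdf P z := by
  obtain ⟨hx0, hx1⟩ := hx
  set S := {z : ℝ | x ≤ cdf P z} with hS
  have hne : S.Nonempty := by
    have h : ∀ᶠ z in atTop, x ≤ cdf P z := by
      have := (ProbabilityTheory.tendsto_cdf_atTop P).eventually (eventually_ge_nhds hx1)
      filter_upwards [this] with z hz
      rw [cdf_eq]; exact hz
    exact h.exists
  have hw : ∃ w, cdf P w < x := by
    have h : ∀ᶠ z in atBot, cdf P z < x := by
      have := (ProbabilityTheory.tendsto_cdf_atBot P).eventually (eventually_lt_nhds hx0)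
      filter_upwards [this] with z hz
      rw [cdf_eq]; exact hz
    exact h.exists
  obtain ⟨w, hwlt⟩ := hw
  have hbdd : BddBelow S := by
    refine ⟨w, fun s hs => ?_⟩
    by_contra hws
    push_neg at hws
    exact absurd (le_trans hs (cdf_mono P hws.le)) (not_le.mpr hwlt)
  have hmem : x ≤ cdf P (quantile P x) := by
    have hcont : ContinuousWithinAt (ProbabilityTheory.cdf P) (Ici (quantile P x)) (quantile P x) :=
      (ProbabilityTheory.cdf P).right_continuous _
    have hcont' : Tendsto (cdf P) (𝓝[>] (quantile P x)) (𝓝 (cdf P (quantile P x))) := by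
      rw [show cdf P = fun z => ProbabilityTheory.cdf P z from funext (cdf_eq P)]
      exact (hcont.mono Ioi_subset_Ici_self).tendsto
    refine ge_of_tendsto hcont' ?_
    filter_upwards [self_mem_nhdsWithin] with t ht
    obtain ⟨s, hsS, hst⟩ := exists_lt_of_csInf_lt hne ht
    exact le_trans hsS (cdf_mono P hst.le)
  constructor
  · intro h
    exact le_trans hmem (cdf_mono P h)
  · intro h
    exact csInf_le hbdd h

/-- Indicator version of the quantile, which is globally measurable. -/
noncomputable def qI (P : Measure ℝ) : ℝ → ℝ := (Ioo 0 1).indicator (quantile P)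

omit [IsProbabilityMeasure P] in
lemma qI_eq_on {x : ℝ} (hx : x ∈ Ioo (0:ℝ) 1) : qI P x = quantile P x :=
  Set.indicator_of_mem hx _

lemma qI_measurable : Measurable (qI P) := by
  apply measurable_of_Iic
  intro z
  by_cases hz : (0:ℝ) ≤ z
  · have : qI P ⁻¹' Iic z = (Ioo 0 1 ∩ Iic (cdf P z)) ∪ (Ioo 0 1)ᶜ := by
      ext x
      by_cases hx : x ∈ Ioo (0:ℝ) 1
      · simp [qI, Set.indicator_of_mem hx, hx, gal P hx z]
      · simp [qI, Set.indicator_of_notMem hx, hx, hz]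
    rw [this]
    exact (measurableSet_Ioo.inter measurableSet_Iic).union measurableSet_Ioo.compl
  · have : qI P ⁻¹' Iic z = Ioo 0 1 ∩ Iic (cdf P z) := by
      ext x
      by_cases hx : x ∈ Ioo (0:ℝ) 1
      · simp [qI, Set.indicator_of_mem hx, hx, gal P hx z]
      · simp [qI, Set.indicator_of_notMem hx, hx, hz]
    rw [this]
    exact measurableSet_Ioo.inter measurableSet_Iic

end aux

section intervals

lemma vol_squeeze {a b : ℝ} {S : Set ℝ} (h1 : Ioo a b ⊆ S) (h2 : S ⊆ Ioc a b) :
    volume S = ENNReal.ofReal (b - a) := by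
  refine le_antisymm ?_ ?_
  · calc volume S ≤ volume (Ioc a b) := measure_mono h2
      _ = ENNReal.ofReal (b - a) := Real.volume_Ioc
  · calc ENNReal.ofReal (b - a) = volume (Ioo a b) := Real.volume_Ioo.symm
      _ ≤ volume S := measure_mono h1

lemma xor_set_t (a b : ℝ) : {t : ℝ | ¬((a ≤ t) ↔ (b ≤ t))} = Ico (a ⊓ b) (a ⊔ b) := by
  ext t
  simp only [mem_setOf_eq, mem_Ico]
  constructor
  · intro h
    by_cases ha : a ≤ t <;> by_cases hb : b ≤ t
    · exact absurd (iff_of_true ha hb) h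
    · exact ⟨le_trans inf_le_left ha, lt_of_lt_of_le (not_le.mp hb) le_sup_right⟩
    · exact ⟨le_trans inf_le_right hb, lt_of_lt_of_le (not_le.mp ha) le_sup_left⟩
    · exact absurd (iff_of_false ha hb) h
  · rintro ⟨h1, h2⟩ hiff
    rcases le_total a b with hab | hab
    · rw [inf_eq_left.mpr hab] at h1
      rw [sup_eq_right.mpr hab] at h2
      exact absurd (hiff.mp h1) (not_le.mpr h2)
    · rw [inf_eq_right.mpr hab] at h1
      rw [sup_eq_left.mpr hab] at h2
      exact absurd (hiff.mpr h1) (not_le.mpr h2)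

lemma xor_set_x (a b : ℝ) : {x : ℝ | ¬((x ≤ a) ↔ (x ≤ b))} = Ioc (a ⊓ b) (a ⊔ b) := by
  ext x
  simp only [mem_setOf_eq, mem_Ioc]
  constructor
  · intro h
    by_cases ha : x ≤ a <;> by_cases hb : x ≤ b
    · exact absurd (iff_of_true ha hb) h
    · exact ⟨lt_of_le_of_lt inf_le_right (not_le.mp hb), le_trans ha le_sup_left⟩
    · exact ⟨lt_of_le_of_lt inf_le_left (not_le.mp ha), le_trans hb le_sup_right⟩
    · exact absurd (iff_of_false ha hb) h
  · rintro ⟨h1, h2⟩ hiff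
    rcases le_total a b with hab | hab
    · rw [inf_eq_left.mpr hab] at h1
      rw [sup_eq_right.mpr hab] at h2
      exact absurd (hiff.mpr h2) (not_le.mpr h1)
    · rw [inf_eq_right.mpr hab] at h1
      rw [sup_eq_left.mpr hab] at h2
      exact absurd (hiff.mp h2) (not_le.mpr h1)

lemma lint_xor (a b : ℝ) :
    ∫⁻ t : ℝ, ({t : ℝ | ¬((a ≤ t) ↔ (b ≤ t))}).indicator (fun _ => (1:ℝ≥0∞)) t
      = ENNReal.ofReal |a - b| := by
  rw [xor_set_t, lintegral_indicator measurableSet_Ico, setLIntegral_one, Real.volume_Ico,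
    max_sub_min_eq_abs, abs_sub_comm]

end intervals

section pushforward
variable (P : Measure ℝ) [IsProbabilityMeasure P]

instance : IsProbabilityMeasure (volume.restrict (Ioo (0:ℝ) 1)) :=
  ⟨by rw [Measure.restrict_apply_univ, Real.volume_Ioo]; norm_num⟩

lemma map_qI : (volume.restrict (Ioo (0:ℝ) 1)).map (qI P) = P := by
  have : IsProbabilityMeasure ((volume.restrict (Ioo (0:ℝ) 1)).map (qI P)) :=
    Measure.isProbabilityMeasure_map (qI_measurable P).aemeasurable
  refine Measure.ext_of_Iic _ _ (fun z => ?_)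
  rw [Measure.map_apply (qI_measurable P) measurableSet_Iic,
    Measure.restrict_apply' measurableSet_Ioo]
  have h1 : Ioo 0 (cdf P z) ⊆ qI P ⁻¹' Iic z ∩ Ioo 0 1 := by
    intro x hx
    have hx' : x ∈ Ioo (0:ℝ) 1 := ⟨hx.1, lt_of_lt_of_le hx.2 (cdf_le_one' P z)⟩
    refine ⟨?_, hx'⟩
    rw [mem_preimage, mem_Iic, qI_eq_on P hx', gal P hx']
    exact hx.2.le
  have h2 : qI P ⁻¹' Iic z ∩ Ioo 0 1 ⊆ Ioc 0 (cdf P z) := by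
    rintro x ⟨hx1, hx2⟩
    rw [mem_preimage, mem_Iic, qI_eq_on P hx2, gal P hx2] at hx1
    exact ⟨hx2.1, hx1⟩
  rw [vol_squeeze h1 h2, sub_zero, cdf]
  exact ENNReal.ofReal_toReal (measure_ne_top P _)

end pushforward

section area
variable (P Q : Measure ℝ) [IsProbabilityMeasure P] [IsProbabilityMeasure Q]

/-- Area between the graphs: the `L¹` distance of the cdfs equals the `L¹` distance
of the quantile functions. -/
lemma area_identity :
    ∫⁻ t : ℝ, ENNReal.ofReal |cdf P t - cdf Q t|
      = ∫⁻ x in Ioo (0:ℝ) 1, ENNReal.ofReal |quantile P x - quantile Q x| := by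
  set μ := volume.restrict (Ioo (0:ℝ) 1) with hμ
  set D : Set (ℝ × ℝ) := {p | ¬((qI P p.2 ≤ p.1) ↔ (qI Q p.2 ≤ p.1))} with hDdef
  have hA : MeasurableSet {p : ℝ × ℝ | qI P p.2 ≤ p.1} :=
    measurableSet_le ((qI_measurable P).comp measurable_snd) measurable_fst
  have hB : MeasurableSet {p : ℝ × ℝ | qI Q p.2 ≤ p.1} :=
    measurableSet_le ((qI_measurable Q).comp measurable_snd) measurable_fst
  have hD : MeasurableSet D := by
    have : D = ({p : ℝ × ℝ | qI P p.2 ≤ p.1} \ {p : ℝ × ℝ | qI Q p.2 ≤ p.1})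
        ∪ ({p : ℝ × ℝ | qI Q p.2 ≤ p.1} \ {p : ℝ × ℝ | qI P p.2 ≤ p.1}) := by
      ext p
      simp only [hDdef, mem_setOf_eq, mem_union, mem_diff, mem_setOf_eq]
      tauto
    rw [this]
    exact (hA.diff hB).union (hB.diff hA)
  have step1 : ∀ t : ℝ, ∫⁻ x, D.indicator (fun _ => (1:ℝ≥0∞)) (t, x) ∂μ
      = ENNReal.ofReal |cdf P t - cdf Q t| := by
    intro t
    have hre : ∀ x : ℝ, D.indicator (fun _ => (1:ℝ≥0∞)) (t, x)
        = ({x : ℝ | (t, x) ∈ D}).indicator (fun _ => (1:ℝ≥0∞)) x := by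
      intro x
      simp only [Set.indicator_apply, mem_setOf_eq]
    simp_rw [hre]
    have hsm : MeasurableSet {x : ℝ | (t, x) ∈ D} := hD.preimage measurable_prodMk_left
    rw [lintegral_indicator hsm, setLIntegral_one, hμ,
      Measure.restrict_apply' measurableSet_Ioo]
    have h1 : Ioo (cdf P t ⊓ cdf Q t) (cdf P t ⊔ cdf Q t)
        ⊆ {x : ℝ | (t, x) ∈ D} ∩ Ioo 0 1 := by
      intro x hx
      have hx' : x ∈ Ioo (0:ℝ) 1 :=
        ⟨lt_of_le_of_lt (le_inf (cdf_nonneg' P t) (cdf_nonneg' Q t)) hx.1,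
          lt_of_lt_of_le hx.2 (sup_le (cdf_le_one' P t) (cdf_le_one' Q t))⟩
      refine ⟨?_, hx'⟩
      have : x ∈ {x : ℝ | ¬((x ≤ cdf P t) ↔ (x ≤ cdf Q t))} := by
        rw [xor_set_x]
        exact ⟨hx.1, hx.2.le⟩
      simp only [hDdef, mem_setOf_eq, qI_eq_on P hx', qI_eq_on Q hx', gal P hx', gal Q hx']
      exact this
    have h2 : {x : ℝ | (t, x) ∈ D} ∩ Ioo 0 1
        ⊆ Ioc (cdf P t ⊓ cdf Q t) (cdf P t ⊔ cdf Q t) := by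
      rintro x ⟨hx1, hx2⟩
      simp only [hDdef, mem_setOf_eq, qI_eq_on P hx2, qI_eq_on Q hx2,
        gal P hx2, gal Q hx2] at hx1
      rw [← xor_set_x]
      exact hx1
    rw [vol_squeeze h1 h2, max_sub_min_eq_abs, abs_sub_comm]
  have step3 : ∀ x ∈ Ioo (0:ℝ) 1, ∫⁻ t, D.indicator (fun _ => (1:ℝ≥0∞)) (t, x)
      = ENNReal.ofReal |quantile P x - quantile Q x| := by
    intro x hx
    have hre : ∀ t : ℝ, D.indicator (fun _ => (1:ℝ≥0∞)) (t, x)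
        = ({t : ℝ | ¬((qI P x ≤ t) ↔ (qI Q x ≤ t))}).indicator (fun _ => (1:ℝ≥0∞)) t := by
      intro t
      simp only [Set.indicator_apply, hDdef, mem_setOf_eq]
    simp_rw [hre]
    rw [lint_xor, qI_eq_on P hx, qI_eq_on Q hx]
  have hswap : ∫⁻ t : ℝ, ∫⁻ x, D.indicator (fun _ => (1:ℝ≥0∞)) (t, x) ∂μ ∂volume
      = ∫⁻ x, ∫⁻ t : ℝ, D.indicator (fun _ => (1:ℝ≥0∞)) (t, x) ∂volume ∂μ := by
    apply lintegral_lintegral_swap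
    exact ((measurable_one.indicator hD).comp measurable_id).aemeasurable
  calc ∫⁻ t : ℝ, ENNReal.ofReal |cdf P t - cdf Q t|
      = ∫⁻ t : ℝ, ∫⁻ x, D.indicator (fun _ => (1:ℝ≥0∞)) (t, x) ∂μ := by
        exact lintegral_congr fun t => (step1 t).symm
    _ = ∫⁻ x, ∫⁻ t : ℝ, D.indicator (fun _ => (1:ℝ≥0∞)) (t, x) ∂volume ∂μ := hswap
    _ = ∫⁻ x in Ioo (0:ℝ) 1, ENNReal.ofReal |quantile P x - quantile Q x| := by
        exact setLIntegral_congr_fun measurableSet_Ioo step3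

end area
section coupling
open MeasureTheory Set ENNReal
variable (P Q : Measure ℝ) [IsProbabilityMeasure P] [IsProbabilityMeasure Q]

lemma coupling_ge (π : Measure (ℝ × ℝ)) (hπ : IsProbabilityMeasure π)
    (h1 : π.map Prod.fst = P) (h2 : π.map Prod.snd = Q) :
    ∫⁻ t : ℝ, ENNReal.ofReal |cdf P t - cdf Q t| ≤ ∫⁻ p, ENNReal.ofReal |p.1 - p.2| ∂π := by
  set E : Set (ℝ × (ℝ × ℝ)) := {q | ¬((q.2.1 ≤ q.1) ↔ (q.2.2 ≤ q.1))} with hEdef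
  have hA : MeasurableSet {q : ℝ × (ℝ × ℝ) | q.2.1 ≤ q.1} :=
    measurableSet_le (measurable_fst.comp measurable_snd) measurable_fst
  have hB : MeasurableSet {q : ℝ × (ℝ × ℝ) | q.2.2 ≤ q.1} :=
    measurableSet_le (measurable_snd.comp measurable_snd) measurable_fst
  have hE : MeasurableSet E := by
    have : E = ({q : ℝ × (ℝ × ℝ) | q.2.1 ≤ q.1} \ {q : ℝ × (ℝ × ℝ) | q.2.2 ≤ q.1})
        ∪ ({q : ℝ × (ℝ × ℝ) | q.2.2 ≤ q.1} \ {q : ℝ × (ℝ × ℝ) | q.2.1 ≤ q.1}) := by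
      ext q
      simp only [hEdef, mem_setOf_eq, mem_union, mem_diff, mem_setOf_eq]
      tauto
    rw [this]
    exact (hA.diff hB).union (hB.diff hA)
  -- pointwise in p : the t-integral gives |p.1 - p.2|
  have key : ∀ p : ℝ × ℝ, ∫⁻ t : ℝ, E.indicator (fun _ => (1:ℝ≥0∞)) (t, p)
      = ENNReal.ofReal |p.1 - p.2| := by
    intro p
    have hre : ∀ t : ℝ, E.indicator (fun _ => (1:ℝ≥0∞)) (t, p)
        = ({t : ℝ | ¬((p.1 ≤ t) ↔ (p.2 ≤ t))}).indicator (fun _ => (1:ℝ≥0∞)) t := by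
      intro t
      simp only [Set.indicator_apply, hEdef, mem_setOf_eq]
    simp_rw [hre]
    exact lint_xor p.1 p.2
  -- pointwise in t : the π-integral dominates |F_P t - F_Q t|
  have step : ∀ t : ℝ, ENNReal.ofReal |cdf P t - cdf Q t|
      ≤ ∫⁻ p, E.indicator (fun _ => (1:ℝ≥0∞)) (t, p) ∂π := by
    intro t
    have hre : ∀ p : ℝ × ℝ, E.indicator (fun _ => (1:ℝ≥0∞)) (t, p)
        = ({p : ℝ × ℝ | (t, p) ∈ E}).indicator (fun _ => (1:ℝ≥0∞)) p := by
      intro p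
      simp only [Set.indicator_apply, mem_setOf_eq]
    have hsm : MeasurableSet {p : ℝ × ℝ | (t, p) ∈ E} := hE.preimage measurable_prodMk_left
    simp_rw [hre]
    rw [lintegral_indicator hsm, setLIntegral_one]
    -- identify the marginals
    have hPA : P (Iic t) = π ({p : ℝ × ℝ | p.1 ≤ t}) := by
      rw [← h1, Measure.map_apply measurable_fst measurableSet_Iic]
      rfl
    have hQB : Q (Iic t) = π ({p : ℝ × ℝ | p.2 ≤ t}) := by
      rw [← h2, Measure.map_apply measurable_snd measurableSet_Iic]
      rfl
    have hsubA : {p : ℝ × ℝ | p.1 ≤ t} \ {p : ℝ × ℝ | p.2 ≤ t} ⊆ {p : ℝ × ℝ | (t, p) ∈ E} := by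
      rintro p ⟨hp1, hp2⟩
      simp only [hEdef, mem_setOf_eq] at *
      tauto
    have hsubB : {p : ℝ × ℝ | p.2 ≤ t} \ {p : ℝ × ℝ | p.1 ≤ t} ⊆ {p : ℝ × ℝ | (t, p) ∈ E} := by
      rintro p ⟨hp1, hp2⟩
      simp only [hEdef, mem_setOf_eq] at *
      tauto
    have hdiffA : π {p : ℝ × ℝ | p.1 ≤ t} - π {p : ℝ × ℝ | p.2 ≤ t}
        ≤ π {p : ℝ × ℝ | (t, p) ∈ E} := by
      refine le_trans ?_ (measure_mono hsubA)
      refine tsub_le_iff_right.mpr ?_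
      exact le_trans (measure_mono (Set.subset_diff_union _ _)) (measure_union_le _ _)
    have hdiffB : π {p : ℝ × ℝ | p.2 ≤ t} - π {p : ℝ × ℝ | p.1 ≤ t}
        ≤ π {p : ℝ × ℝ | (t, p) ∈ E} := by
      refine le_trans ?_ (measure_mono hsubB)
      refine tsub_le_iff_right.mpr ?_
      exact le_trans (measure_mono (Set.subset_diff_union _ _)) (measure_union_le _ _)
    rcases le_total (cdf P t) (cdf Q t) with h | h
    · have hle : P (Iic t) ≤ Q (Iic t) := by
        rw [← ENNReal.toReal_le_toReal (measure_ne_top P _) (measure_ne_top Q _)] at *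
        exact h
      have : ENNReal.ofReal |cdf P t - cdf Q t| = Q (Iic t) - P (Iic t) := by
        rw [abs_sub_comm, abs_of_nonneg (sub_nonneg.mpr h), cdf, cdf,
          ← ENNReal.toReal_sub_of_le hle (measure_ne_top Q _),
          ENNReal.ofReal_toReal (by simp [ENNReal.sub_ne_top, measure_ne_top])]
      rw [this, hPA, hQB]
      exact hdiffB
    · have hle : Q (Iic t) ≤ P (Iic t) := by
        rw [← ENNReal.toReal_le_toReal (measure_ne_top Q _) (measure_ne_top P _)] at *
        exact h
      have : ENNReal.ofReal |cdf P t - cdf Q t| = P (Iic t) - Q (Iic t) := by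
        rw [abs_of_nonneg (sub_nonneg.mpr h), cdf, cdf,
          ← ENNReal.toReal_sub_of_le hle (measure_ne_top P _),
          ENNReal.ofReal_toReal (by simp [ENNReal.sub_ne_top, measure_ne_top])]
      rw [this, hPA, hQB]
      exact hdiffA
  have hswap : ∫⁻ t : ℝ, ∫⁻ p, E.indicator (fun _ => (1:ℝ≥0∞)) (t, p) ∂π ∂volume
      = ∫⁻ p, ∫⁻ t : ℝ, E.indicator (fun _ => (1:ℝ≥0∞)) (t, p) ∂volume ∂π := by
    apply lintegral_lintegral_swap
    exact ((measurable_one.indicator hE).comp measurable_id).aemeasurable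
  calc ∫⁻ t : ℝ, ENNReal.ofReal |cdf P t - cdf Q t|
      ≤ ∫⁻ t : ℝ, ∫⁻ p, E.indicator (fun _ => (1:ℝ≥0∞)) (t, p) ∂π := lintegral_mono step
    _ = ∫⁻ p, ∫⁻ t : ℝ, E.indicator (fun _ => (1:ℝ≥0∞)) (t, p) ∂volume ∂π := hswap
    _ = ∫⁻ p, ENNReal.ofReal |p.1 - p.2| ∂π := lintegral_congr key

end coupling
/-- The infimum of `∫ |u - v| dπ` over all couplings `π` of `P` and `Q`
equals the `L¹` distance of the quantile functions on `(0,1)` (1-Wasserstein distance). -/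
theorem stmt13 (P Q : Measure ℝ) [IsProbabilityMeasure P] [IsProbabilityMeasure Q] :
    sInf { I : ℝ≥0∞ | ∃ π : Measure (ℝ × ℝ), IsProbabilityMeasure π ∧
        π.map Prod.fst = P ∧ π.map Prod.snd = Q ∧
        I = ∫⁻ p, ENNReal.ofReal |p.1 - p.2| ∂π }
      = ∫⁻ x in Ioo (0:ℝ) 1, ENNReal.ofReal |quantile P x - quantile Q x| := by
  set μ := volume.restrict (Ioo (0:ℝ) 1) with hμ
  have hpair : Measurable (fun x => (qI P x, qI Q x)) :=
    (qI_measurable P).prodMk (qI_measurable Q)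
  set π₀ := μ.map (fun x => (qI P x, qI Q x)) with hπ₀
  have habs : Measurable (fun p : ℝ × ℝ => ENNReal.ofReal |p.1 - p.2|) :=
    ((measurable_fst.sub measurable_snd).abs).ennreal_ofReal
  have hprob : IsProbabilityMeasure π₀ := Measure.isProbabilityMeasure_map hpair.aemeasurable
  have hfst : π₀.map Prod.fst = P := by
    rw [hπ₀, Measure.map_map measurable_fst hpair]
    exact map_qI P
  have hsnd : π₀.map Prod.snd = Q := by
    rw [hπ₀, Measure.map_map measurable_snd hpair]
    exact map_qI Q
  have hint : ∫⁻ p, ENNReal.ofReal |p.1 - p.2| ∂π₀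
      = ∫⁻ x in Ioo (0:ℝ) 1, ENNReal.ofReal |quantile P x - quantile Q x| := by
    rw [hπ₀, lintegral_map habs hpair]
    refine setLIntegral_congr_fun measurableSet_Ioo (fun x hx => ?_)
    rw [qI_eq_on P hx, qI_eq_on Q hx]
  apply le_antisymm
  · exact sInf_le ⟨π₀, hprob, hfst, hsnd, hint.symm⟩
  · refine le_sInf ?_
    rintro I ⟨π, hπ, h1, h2, rfl⟩
    rw [← area_identity P Q]
    exact coupling_ge P Q π hπ h1 h2
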